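/- Let P be an orthogonal projection and X = X* a P-codiagonal bounded operator (PXP = 0 = (1-P)X(1-P)). Then P - e^{iX} P e^{-iX} = -i·sinc(X)·[P, X]·e^{-iX}, where sinc is the entire function sinc(t) = sin(t)/t; equivalently, [P, e^{iX}] = i·sinc(X)·[P, X]. -/

import Mathlib

variable {H : Type*} [NormedAddCommGroup H] [InnerProductSpace ℂ H] [CompleteSpace H]

/-- The operator `sinc(X) = Σ_{n≥0} (-1)^n X^(2n) / (2n+1)!`, given by the entire
function `sinc(t) = sin(t)/t`. -/
noncomputable def sincOp (X : H →L[ℂ] H) : H →L[ℂ] H :=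
  ∑' n : ℕ, (((-1 : ℂ) ^ n / ((2 * n + 1).factorial : ℂ)) • X ^ (2 * n))

lemma norm_pow_le_clm (X : H →L[ℂ] H) : ∀ k : ℕ, ‖X ^ k‖ ≤ ‖X‖ ^ k := by
  intro k
  induction k with
  | zero => simpa [ContinuousLinearMap.one_def] using ContinuousLinearMap.norm_id_le
  | succ n ih =>
    rw [pow_succ, pow_succ]
    exact (norm_mul_le _ _).trans
      (mul_le_mul_of_nonneg_right ih (norm_nonneg _))

lemma sincOp_summable (X : H →L[ℂ] H) :
    Summable fun n : ℕ => (((-1 : ℂ) ^ n / ((2 * n + 1).factorial : ℂ)) • X ^ (2 * n)) := by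
  apply Summable.of_norm
  have h2 : Summable fun n : ℕ => ‖X‖ ^ (2 * n) / ((2 * n).factorial : ℝ) := by
    have := (Real.summable_pow_div_factorial ‖X‖).comp_injective
      (fun a b h => by dsimp only at h; omega : Function.Injective fun n : ℕ => 2 * n)
    simpa [Function.comp_def] using this
  refine Summable.of_nonneg_of_le (fun n => norm_nonneg _) (fun n => ?_) h2
  calc ‖(((-1 : ℂ) ^ n / ((2 * n + 1).factorial : ℂ)) • X ^ (2 * n))‖
      = (((2 * n + 1).factorial : ℝ))⁻¹ * ‖X ^ (2 * n)‖ := by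
        rw [norm_smul]
        congr 1
        rw [norm_div, norm_pow, norm_neg, norm_one, one_pow]
        simp [Complex.norm_natCast, one_div]
    _ ≤ (((2 * n).factorial : ℝ))⁻¹ * ‖X‖ ^ (2 * n) := by
        have hfle : ((2 * n).factorial : ℝ) ≤ ((2 * n + 1).factorial : ℝ) := by
          exact_mod_cast Nat.factorial_le (by omega)
        have hpos : (0 : ℝ) < ((2 * n).factorial : ℝ) := by positivity
        exact mul_le_mul (by gcongr) (norm_pow_le_clm X _)
          (norm_nonneg _) (by positivity)
    _ = ‖X‖ ^ (2 * n) / ((2 * n).factorial : ℝ) := by rw [div_eq_inv_mul, mul_comm]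

/-- If `P` is an orthogonal projection and `X = X*` is `P`-codiagonal, then
`P - e^{iX} P e^{-iX} = i·sinc(X)·[P,X]·e^{-iX}`; equivalently,
`[P, e^{iX}] = i·sinc(X)·[P, X]`. -/
theorem stmt17 (P X : H →L[ℂ] H) (hP : IsSelfAdjoint P) (hP2 : P * P = P)
    (hX : IsSelfAdjoint X)
    (hcd1 : P * X * P = 0) (hcd2 : (1 - P) * X * (1 - P) = 0) :
    P - NormedSpace.exp (Complex.I • X) * P * NormedSpace.exp (-(Complex.I • X)) =
      Complex.I • (sincOp X * (P * X - X * P) * NormedSpace.exp (-(Complex.I • X))) ∧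
    P * NormedSpace.exp (Complex.I • X) - NormedSpace.exp (Complex.I • X) * P =
      Complex.I • (sincOp X * (P * X - X * P)) := by
  -- key relation : P * X = X - X * P
  have hPX : P * X = X - X * P := by
    have h : X - X * P - P * X + P * X * P = 0 := by
      rw [← hcd2]; noncomm_ring
    rw [hcd1, add_zero, sub_eq_zero] at h
    exact h.symm
  have hsq : P * (X * X) = X * X * P := by
    calc P * (X * X) = (P * X) * X := by rw [mul_assoc]
      _ = (X - X * P) * X := by rw [hPX]
      _ = X * X - X * (P * X) := by noncomm_ring
      _ = X * X - X * (X - X * P) := by rw [hPX]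
      _ = X * X * P := by noncomm_ring
  have heven : ∀ m : ℕ, P * X ^ (2 * m) = X ^ (2 * m) * P := by
    intro m
    induction m with
    | zero => simp
    | succ k ih =>
      have h2 : X ^ (2 * (k + 1)) = X ^ (2 * k) * (X * X) := by
        rw [show 2 * (k + 1) = 2 * k + 2 by ring, pow_add, pow_two]
      rw [h2, ← mul_assoc, ih, mul_assoc, hsq, ← mul_assoc]
  have hodd : ∀ m : ℕ, P * X ^ (2 * m + 1) - X ^ (2 * m + 1) * P
      = X ^ (2 * m) * (P * X - X * P) := by
    intro m
    rw [pow_succ, ← mul_assoc, heven m]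
    noncomm_ring
  -- exp as tsum
  set E := NormedSpace.exp (Complex.I • X) with hE
  have hf : Summable fun n : ℕ => ((n.factorial : ℂ))⁻¹ • (Complex.I • X) ^ n :=
    NormedSpace.expSeries_summable' (Complex.I • X)
  have hEtsum : E = ∑' n : ℕ, ((n.factorial : ℂ))⁻¹ • (Complex.I • X) ^ n := by
    rw [hE, NormedSpace.exp_eq_tsum ℂ]
  set g : ℕ → (H →L[ℂ] H) := fun n =>
    (((n.factorial : ℂ))⁻¹ * Complex.I ^ n) • (P * X ^ n - X ^ n * P) with hgdef
  have hterm : ∀ n : ℕ,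
      P * (((n.factorial : ℂ))⁻¹ • (Complex.I • X) ^ n)
        - (((n.factorial : ℂ))⁻¹ • (Complex.I • X) ^ n) * P = g n := by
    intro n
    rw [hgdef]
    simp only [smul_pow, mul_smul_comm, smul_mul_assoc, smul_smul, smul_sub]
  have hcomm : P * E - E * P = ∑' n, g n := by
    rw [hEtsum, ← hf.tsum_mul_left P, ← hf.tsum_mul_right P,
      ← Summable.tsum_sub (hf.mul_left P) (hf.mul_right P)]
    exact tsum_congr hterm
  have hg : Summable g :=
    ((hf.mul_left P).sub (hf.mul_right P)).congr hterm
  have hge : ∀ m : ℕ, g (2 * m) = 0 := by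
    intro m
    rw [hgdef]
    simp only [heven m, sub_self, smul_zero]
  have hgo : ∀ m : ℕ, g (2 * m + 1) =
      Complex.I • ((((-1 : ℂ) ^ m / ((2 * m + 1).factorial : ℂ)) • X ^ (2 * m))
        * (P * X - X * P)) := by
    intro m
    rw [hgdef]
    simp only [hodd m, smul_mul_assoc, smul_smul]
    congr 1
    have hI : Complex.I ^ (2 * m + 1) = (-1 : ℂ) ^ m * Complex.I := by
      rw [pow_succ, pow_mul, Complex.I_sq]
    rw [hI]
    field_simp
  have hgosum : Summable fun m : ℕ => g (2 * m + 1) :=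
    hg.comp_injective (fun a b h => by dsimp only at h; omega : Function.Injective fun m : ℕ => 2 * m + 1)
  have hsum2 : ∑' n, g n = Complex.I • (sincOp X * (P * X - X * P)) := by
    rw [← tsum_even_add_odd (by simpa [hge] using summable_zero) hgosum]
    have h0 : (∑' m : ℕ, g (2 * m)) = 0 := by simp [hge]
    rw [h0, zero_add]
    have hs := sincOp_summable X
    rw [sincOp, ← hs.tsum_mul_right (P * X - X * P),
      ← Summable.tsum_const_smul Complex.I (hs.mul_right (P * X - X * P))]
    exact tsum_congr hgo
  have h2 : P * E - E * P = Complex.I • (sincOp X * (P * X - X * P)) := hcomm.trans hsum2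
  refine ⟨?_, h2⟩
  have hEE : E * NormedSpace.exp (-(Complex.I • X)) = 1 := by
    rw [hE, ← NormedSpace.exp_add_of_commute_of_mem_ball (𝕂 := ℂ) (Commute.refl (Complex.I • X)).neg_right
        ((NormedSpace.expSeries_radius_eq_top ℂ (H →L[ℂ] H)).symm ▸ edist_lt_top _ _)
        ((NormedSpace.expSeries_radius_eq_top ℂ (H →L[ℂ] H)).symm ▸ edist_lt_top _ _),
      add_neg_cancel, NormedSpace.exp_zero]
  calc P - E * P * NormedSpace.exp (-(Complex.I • X))
      = (P * E - E * P) * NormedSpace.exp (-(Complex.I • X)) := by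
        rw [sub_mul, mul_assoc P E, hEE, mul_one, mul_assoc]
    _ = Complex.I • (sincOp X * (P * X - X * P) * NormedSpace.exp (-(Complex.I • X))) := by
        rw [h2, smul_mul_assoc]
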